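/- Let r ≥ 1 and p ≥ 5 be coprime integers and n ≥ 1. Consider the r×r circulant matrix A over Z/p^n with diagonal entries -2, entries 1 on the two off-diagonals adjacent to the diagonal (cyclically, so A_{1,r} = A_{r,1} = 1 when r ≥ 3), and 0 elsewhere (this is the intersection matrix of the Néron r-gon). Then the kernel of A acting on (Z/p^n)^r is exactly the diagonal subgroup {(a, a, ..., a) : a ∈ Z/p^n}. -/

import Mathlib

/-!
STATEMENT 10. Let `r ≥ 1` and `p ≥ 5` be coprime, `p` prime, `n ≥ 1`.  The
`r × r` circulant matrix `A` over `ℤ/pⁿ` with `-2` on the diagonal and `1` on the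
two cyclically adjacent off-diagonals (the intersection matrix of the Néron
`r`-gon; for `r = 1` this is `(0)` and for `r = 2` it is `((-2,2),(2,-2))`) has
kernel exactly the diagonal subgroup `{(a, …, a)}` of `(ℤ/pⁿ)^r`.
-/
open Fin.NatCast in
theorem neron_polygon_intersection_matrix_kernel
    (p r n : ℕ) [NeZero r] (hp : p.Prime) (hp5 : 5 ≤ p)
    (hr : Nat.Coprime r p) (hn : 1 ≤ n)
    (v : Fin r → ZMod (p ^ n)) :
    (Matrix.of fun i j : Fin r =>
        (if j = i then (-2 : ZMod (p ^ n)) else 0) +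
          (if j = i + 1 then 1 else 0) + (if j = i - 1 then 1 else 0)).mulVec v = 0 ↔
      ∃ a : ZMod (p ^ n), v = fun _ => a := by
  constructor
  · intro h
    have key : ∀ i : Fin r, v (i + 1) - v i = v i - v (i - 1) := by
      intro i
      have hi := congrFun h i
      simp only [Matrix.mulVec, dotProduct, Matrix.of_apply, add_mul, ite_mul, zero_mul,
        Finset.sum_add_distrib, Finset.sum_ite_eq', Finset.mem_univ, if_true,
        Pi.zero_apply] at hi
      linear_combination hi
    set d := v 1 - v 0 with hd
    have hstep : ∀ k : ℕ, v ((k : Fin r) + 1) - v (k : Fin r) = d := by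
      intro k
      induction k with
      | zero => simp [hd]
      | succ k ih =>
        have hc : ((k + 1 : ℕ) : Fin r) = (k : Fin r) + 1 := by push_cast; ring
        rw [hc, key, add_sub_cancel_right]
        exact ih
    have hv : ∀ k : ℕ, v (k : Fin r) = v 0 + (k : ZMod (p ^ n)) * d := by
      intro k
      induction k with
      | zero => simp
      | succ k ih =>
        have hc : ((k + 1 : ℕ) : Fin r) = (k : Fin r) + 1 := by push_cast; ring
        have h1 := hstep k
        rw [hc]
        have : v ((k : Fin r) + 1) = v (k : Fin r) + d := by linear_combination h1
        rw [this, ih]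
        push_cast
        ring
    have hr0 : (r : ZMod (p ^ n)) * d = 0 := by
      have h1 := hv r
      have h2 : ((r : ℕ) : Fin r) = 0 := by
        simp [Fin.natCast_self]
      rw [h2] at h1
      linear_combination -h1
    have hd0 : d = 0 := by
      have hu : IsUnit (r : ZMod (p ^ n)) :=
        (ZMod.isUnit_iff_coprime r (p ^ n)).mpr (hr.pow_right n)
      exact (IsUnit.mul_right_eq_zero hu).mp hr0
    refine ⟨v 0, funext fun i => ?_⟩
    have h1 := hv i.val
    rw [Fin.cast_val_eq_self] at h1
    simp [h1, hd0]
  · rintro ⟨a, rfl⟩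
    funext i
    simp only [Matrix.mulVec, dotProduct, Matrix.of_apply, add_mul, ite_mul, zero_mul,
      Finset.sum_add_distrib, Finset.sum_ite_eq', Finset.mem_univ, if_true, Pi.zero_apply]
    ring
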